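/- Feasibility of explicit steering (Condition 2): Let N ≥ 8 be an integer and h > 0. For every initial state x₀ ∈ ℝ⁵ there exists an input sequence u : [0:N) → ℝ² such that the solution x : [0:N] → ℝ⁵ of the unicycle model with x(0) = x₀ satisfies x(t) = 0 for all t in [1+7T : N], where T := ⌊(N−1)/7⌋, and moreover ‖x(t)‖ ≤ c·max{‖x₀‖^{1/2}, ‖x₀‖} for all t ∈ [1 : 1+7T), where c := 2·(1+h²)^{1/2}·(9/4 + 4/(h²·max{1,(N−8)/7}²))^{1/2}. -/

import Mathlib

noncomputable section SteerAux


noncomputable section SteerAux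

/-- knots for the x-coordinate -/
def kxK (a Dc : ℝ) : ℕ → ℝ := fun i => if i ≤ 1 then a else if i = 4 ∨ i = 5 then Dc else 0
/-- knots for the y-coordinate -/
def kyK (b : ℝ) : ℕ → ℝ := fun i => if i ≤ 3 then b else if i ≤ 5 then b/2 else 0
/-- knots for the heading -/
def ktK (φ θb : ℝ) : ℕ → ℝ := fun i =>
  if i = 0 then φ else if i ≤ 2 then 0 else if i ≤ 4 then θb else if i ≤ 6 then -θb else 0
/-- cumulative arc-length knots -/
def kvK (a d : ℝ) : ℕ → ℝ := fun i =>
  if i ≤ 1 then 0 else if i ≤ 3 then -a else if i ≤ 5 then -a + d else -a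

/-- piecewise linear interpolation of the knots `k i` attained at times `1 + i*T`. -/
def plin (T : ℕ) (k : ℕ → ℝ) (w : ℝ) (t : ℕ) : ℝ :=
  if t = 0 then w
  else k ((t-1)/T) +
    ((t:ℝ) - 1 - ((((t-1)/T) * T : ℕ) : ℝ)) * (k ((t-1)/T + 1) - k ((t-1)/T)) / (T:ℝ)

/-- slope (velocity) function associated to the knots. -/
def slp (T : ℕ) (k : ℕ → ℝ) (h w : ℝ) (t : ℕ) : ℝ :=
  if t = 0 then w else (k ((t-1)/T + 1) - k ((t-1)/T)) / (h * (T:ℝ))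

lemma idx_facts (T : ℕ) (hT : 0 < T) {t : ℕ} (ht : 1 ≤ t) :
    1 + (t-1)/T * T ≤ t ∧ t < 1 + ((t-1)/T + 1) * T := by
  have h := Nat.div_mul_le_self (t - 1) T
  have h2 : (t-1)/T * T + (t-1) % T = t - 1 := by
    rw [mul_comm]; exact Nat.div_add_mod _ _
  have h3 := Nat.mod_lt (t-1) hT
  rw [Nat.add_mul, one_mul]
  omega

lemma plin_eval (T : ℕ) (k : ℕ → ℝ) (w : ℝ) (hT : 0 < T) {i t : ℕ}
    (h1 : 1 + i*T ≤ t) (h2 : t ≤ 1 + (i+1)*T) :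
    plin T k w t = k i + ((t:ℝ) - 1 - (i:ℝ)*(T:ℝ)) * (k (i+1) - k i) / (T:ℝ) := by
  have ht0 : t ≠ 0 := by omega
  have hTR : (T:ℝ) ≠ 0 := Nat.cast_ne_zero.mpr hT.ne'
  rw [plin, if_neg ht0]
  by_cases hb : t = 1 + (i+1)*T
  · have e1 : t - 1 = (i+1)*T := by omega
    have hdiv : (t-1)/T = i+1 := by rw [e1, Nat.mul_div_cancel _ hT]
    have hbr : (t:ℝ) = 1 + ((i:ℝ)+1)*(T:ℝ) := by rw [hb]; push_cast; ring
    rw [hdiv, hbr]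
    push_cast
    field_simp
    ring
  · have hdiv : (t-1)/T = i := Nat.div_eq_of_lt_le (by omega) (by omega)
    rw [hdiv]; push_cast; ring

lemma plin_one (T : ℕ) (k : ℕ → ℝ) (w : ℝ) (hT : 0 < T) : plin T k w 1 = k 0 := by
  rw [plin_eval T k w hT (i := 0) (by omega) (by omega)]
  push_cast
  ring

lemma plin_step (T : ℕ) (k : ℕ → ℝ) (w : ℝ) (hT : 0 < T) {t : ℕ} (ht : 1 ≤ t) :
    plin T k w (t+1) = plin T k w t + (k ((t-1)/T + 1) - k ((t-1)/T)) / (T:ℝ) := by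
  obtain ⟨h1, h2⟩ := idx_facts T hT ht
  have hTR : (T:ℝ) ≠ 0 := Nat.cast_ne_zero.mpr hT.ne'
  rw [plin_eval T k w hT (i := (t-1)/T) (by omega) (by omega),
      plin_eval T k w hT (i := (t-1)/T) h1 h2.le]
  push_cast
  field_simp
  ring

lemma plin_bound (T : ℕ) (k : ℕ → ℝ) (w : ℝ) (hT : 0 < T) {B : ℝ}
    (hB : ∀ i, |k i| ≤ B) {t : ℕ} (ht : 1 ≤ t) : |plin T k w t| ≤ B := by
  obtain ⟨h1, h2⟩ := idx_facts T hT ht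
  set i := (t-1)/T with hi
  have hTR : (0:ℝ) < (T:ℝ) := by exact_mod_cast hT
  rw [plin_eval T k w hT h1 h2.le]
  set μ := ((t:ℝ) - 1 - (i:ℝ)*(T:ℝ)) / (T:ℝ) with hμ
  have hc1 : ((1 + i*T : ℕ):ℝ) ≤ (t:ℝ) := by exact_mod_cast h1
  have hc2 : (t:ℝ) ≤ ((1 + (i+1)*T : ℕ):ℝ) := by exact_mod_cast h2.le
  push_cast at hc1 hc2
  have hμ0 : 0 ≤ μ := by
    apply div_nonneg _ hTR.le
    linarith
  have hμ1 : μ ≤ 1 := by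
    rw [hμ, div_le_one hTR]
    linarith
  have he : k i + ((t:ℝ) - 1 - (i:ℝ)*(T:ℝ)) * (k (i+1) - k i) / (T:ℝ)
      = (1-μ)*k i + μ*k (i+1) := by
    rw [hμ]; field_simp; ring
  rw [he]
  calc |(1-μ)*k i + μ*k (i+1)| ≤ |(1-μ)*k i| + |μ*k (i+1)| := abs_add_le _ _
    _ = (1-μ)*|k i| + μ*|k (i+1)| := by
        rw [abs_mul, abs_mul, abs_of_nonneg (by linarith), abs_of_nonneg hμ0]
    _ ≤ (1-μ)*B + μ*B :=
        add_le_add (mul_le_mul_of_nonneg_left (hB i) (by linarith))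
          (mul_le_mul_of_nonneg_left (hB (i+1)) hμ0)
    _ = B := by ring

lemma plin_tail (T : ℕ) (k : ℕ → ℝ) (w : ℝ) (hT : 0 < T) {j t : ℕ}
    (h : 1 + j*T ≤ t) (hk : ∀ i, j ≤ i → k i = 0) : plin T k w t = 0 := by
  have ht0 : t ≠ 0 := by omega
  have hj : j ≤ (t-1)/T := by
    rw [Nat.le_div_iff_mul_le hT]; omega
  rw [plin, if_neg ht0, hk _ hj, hk _ (hj.trans (Nat.le_succ _))]
  simp

lemma slp_bound (T : ℕ) (k : ℕ → ℝ) (h w : ℝ) (hT : 0 < T) (hh : 0 < h) {C : ℝ}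
    (hC : ∀ i, |k (i+1) - k i| ≤ C) {t : ℕ} (ht : 1 ≤ t) : |slp T k h w t| ≤ C / (h*(T:ℝ)) := by
  rw [slp, if_neg (by omega)]
  have hpos : (0:ℝ) < h*(T:ℝ) := by
    have : (0:ℝ) < (T:ℝ) := by exact_mod_cast hT
    positivity
  rw [abs_div, abs_of_pos hpos]
  exact (div_le_div_iff_of_pos_right hpos).mpr (hC _)

lemma dyn0 (T : ℕ) (hT : 0 < T) (a b d Dc φ θb h : ℝ) (hh : h ≠ 0)
    (hDc : Dc = d * Real.cos θb) (w1 w2 w3 : ℝ) {t : ℕ} (ht : 1 ≤ t) :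
    plin T (kxK a Dc) w1 (t+1) =
      plin T (kxK a Dc) w1 t
        + h * slp T (kvK a d) h w2 t * Real.cos (plin T (ktK φ θb) w3 t) := by
  obtain ⟨h1, h2⟩ := idx_facts T hT ht
  have hTR : (T:ℝ) ≠ 0 := Nat.cast_ne_zero.mpr hT.ne'
  rw [plin_step T _ w1 hT ht, slp, if_neg (by omega : ¬ t = 0)]
  have hrw : ∀ A c : ℝ, h * (A/(h*(T:ℝ)))*c = A*c/(T:ℝ) := by
    intro A c; field_simp
  rw [hrw]
  suffices hs : kxK a Dc ((t-1)/T + 1) - kxK a Dc ((t-1)/T)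
      = (kvK a d ((t-1)/T + 1) - kvK a d ((t-1)/T)) * Real.cos (plin T (ktK φ θb) w3 t) by
    rw [hs]
  generalize hI : (t-1)/T = i at h1 h2 ⊢
  rcases (by omega : i = 0 ∨ i = 1 ∨ i = 2 ∨ i = 3 ∨ i = 4 ∨ i = 5 ∨ i = 6 ∨ 7 ≤ i) with
    hc|hc|hc|hc|hc|hc|hc|hc
  · subst hc; norm_num [kxK, kvK]
  · subst hc
    have hθ : plin T (ktK φ θb) w3 t = 0 := by
      rw [plin_eval T _ w3 hT (i := 1) (by omega) (by omega)]
      norm_num [ktK]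
    rw [hθ]
    norm_num [kxK, kvK]
  · subst hc; norm_num [kxK, kvK]
  · subst hc
    have hθ : plin T (ktK φ θb) w3 t = θb := by
      rw [plin_eval T _ w3 hT (i := 3) (by omega) (by omega)]
      norm_num [ktK]
    rw [hθ]
    norm_num [kxK, kvK]
    rw [hDc]
  · subst hc; norm_num [kxK, kvK]
  · subst hc
    have hθ : plin T (ktK φ θb) w3 t = -θb := by
      rw [plin_eval T _ w3 hT (i := 5) (by omega) (by omega)]
      norm_num [ktK]
    rw [hθ, Real.cos_neg]
    norm_num [kxK, kvK]
    rw [hDc]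
  · subst hc; norm_num [kxK, kvK]
  · have e1 : ¬(i ≤ 1) := by omega
    have e1' : ¬(i+1 ≤ 1) := by omega
    have f1 : ¬(i ≤ 3) := by omega
    have f2 : ¬(i ≤ 5) := by omega
    have f1' : ¬(i+1 ≤ 3) := by omega
    have f2' : ¬(i+1 ≤ 5) := by omega
    simp only [kxK, kvK, if_neg e1, if_neg e1', if_neg f1, if_neg f2, if_neg f1', if_neg f2',
      if_neg (by omega : ¬(i+1 = 4 ∨ i+1 = 5)), if_neg (by omega : ¬(i = 4 ∨ i = 5))]
    ring

lemma dyn1 (T : ℕ) (hT : 0 < T) (a b d φ θb h : ℝ) (hh : h ≠ 0)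
    (hds : d * Real.sin θb = -b/2) (w1 w2 w3 : ℝ) {t : ℕ} (ht : 1 ≤ t) :
    plin T (kyK b) w1 (t+1) =
      plin T (kyK b) w1 t
        + h * slp T (kvK a d) h w2 t * Real.sin (plin T (ktK φ θb) w3 t) := by
  obtain ⟨h1, h2⟩ := idx_facts T hT ht
  have hTR : (T:ℝ) ≠ 0 := Nat.cast_ne_zero.mpr hT.ne'
  rw [plin_step T _ w1 hT ht, slp, if_neg (by omega : ¬ t = 0)]
  have hrw : ∀ A c : ℝ, h * (A/(h*(T:ℝ)))*c = A*c/(T:ℝ) := by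
    intro A c; field_simp
  rw [hrw]
  suffices hs : kyK b ((t-1)/T + 1) - kyK b ((t-1)/T)
      = (kvK a d ((t-1)/T + 1) - kvK a d ((t-1)/T)) * Real.sin (plin T (ktK φ θb) w3 t) by
    rw [hs]
  generalize hI : (t-1)/T = i at h1 h2 ⊢
  rcases (by omega : i = 0 ∨ i = 1 ∨ i = 2 ∨ i = 3 ∨ i = 4 ∨ i = 5 ∨ i = 6 ∨ 7 ≤ i) with
    hc|hc|hc|hc|hc|hc|hc|hc
  · subst hc; norm_num [kyK, kvK]
  · subst hc
    have hθ : plin T (ktK φ θb) w3 t = 0 := by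
      rw [plin_eval T _ w3 hT (i := 1) (by omega) (by omega)]
      norm_num [ktK]
    rw [hθ]
    norm_num [kyK, kvK]
  · subst hc; norm_num [kyK, kvK]
  · subst hc
    have hθ : plin T (ktK φ θb) w3 t = θb := by
      rw [plin_eval T _ w3 hT (i := 3) (by omega) (by omega)]
      norm_num [ktK]
    rw [hθ]
    norm_num [kyK, kvK]
    linarith [hds]
  · subst hc; norm_num [kyK, kvK]
  · subst hc
    have hθ : plin T (ktK φ θb) w3 t = -θb := by
      rw [plin_eval T _ w3 hT (i := 5) (by omega) (by omega)]
      norm_num [ktK]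
    rw [hθ, Real.sin_neg]
    norm_num [kvK, kyK]
    linarith [hds]
  · subst hc; norm_num [kyK, kvK]
  · have f1 : ¬(i ≤ 1) := by omega
    have f2 : ¬(i ≤ 3) := by omega
    have f3 : ¬(i ≤ 5) := by omega
    have f1' : ¬(i+1 ≤ 1) := by omega
    have f2' : ¬(i+1 ≤ 3) := by omega
    have f3' : ¬(i+1 ≤ 5) := by omega
    simp only [kyK, kvK, if_neg f1, if_neg f2, if_neg f3, if_neg f1', if_neg f2', if_neg f3']
    ring

lemma dyn2 (T : ℕ) (hT : 0 < T) (φ θb h : ℝ) (hh : h ≠ 0) (w3 w4 : ℝ) {t : ℕ} (ht : 1 ≤ t) :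
    plin T (ktK φ θb) w3 (t+1) = plin T (ktK φ θb) w3 t + h * slp T (ktK φ θb) h w4 t := by
  have hTR : (T:ℝ) ≠ 0 := Nat.cast_ne_zero.mpr hT.ne'
  rw [plin_step T _ w3 hT ht, slp, if_neg (by omega : ¬ t = 0)]
  field_simp

lemma kx_bound (a Dc d : ℝ) (hd0 : 0 ≤ d) (hDcle : |Dc| ≤ d) :
    ∀ i, |kxK a Dc i| ≤ max |a| d := by
  intro i
  have h0 : (0:ℝ) ≤ max |a| d := le_trans (abs_nonneg a) (le_max_left _ _)
  by_cases c1 : i ≤ 1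
  · simp only [kxK, if_pos c1]; exact le_max_left _ _
  · by_cases c2 : i = 4 ∨ i = 5
    · simp only [kxK, if_neg c1, if_pos c2]; exact le_trans hDcle (le_max_right _ _)
    · simp only [kxK, if_neg c1, if_neg c2, abs_zero]; exact h0

lemma ky_bound (b : ℝ) : ∀ i, |kyK b i| ≤ |b| := by
  intro i
  by_cases c1 : i ≤ 3
  · simp [kyK, if_pos c1]
  · by_cases c2 : i ≤ 5
    · simp only [kyK, if_neg c1, if_pos c2, abs_div]
      have := abs_nonneg b
      rw [abs_of_nonneg (by norm_num : (0:ℝ) ≤ 2)]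
      linarith
    · simp [kyK, if_neg c1, if_neg c2, abs_nonneg]

lemma kt_bound (φ θb : ℝ) : ∀ i, |ktK φ θb i| ≤ max |φ| |θb| := by
  intro i
  have h0 : (0:ℝ) ≤ max |φ| |θb| := le_trans (abs_nonneg φ) (le_max_left _ _)
  by_cases c1 : i = 0
  · simp only [ktK, if_pos c1]; exact le_max_left _ _
  · by_cases c2 : i ≤ 2
    · simp only [ktK, if_neg c1, if_pos c2, abs_zero]; exact h0
    · by_cases c3 : i ≤ 4
      · simp only [ktK, if_neg c1, if_neg c2, if_pos c3]; exact le_max_right _ _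
      · by_cases c4 : i ≤ 6
        · simp only [ktK, if_neg c1, if_neg c2, if_neg c3, if_pos c4, abs_neg]
          exact le_max_right _ _
        · simp only [ktK, if_neg c1, if_neg c2, if_neg c3, if_neg c4, abs_zero]; exact h0

lemma ktd_bound (φ θb : ℝ) : ∀ i, |ktK φ θb (i+1) - ktK φ θb i| ≤ max |φ| (2*|θb|) := by
  intro i
  have h0 : (0:ℝ) ≤ max |φ| (2*|θb|) := le_trans (abs_nonneg φ) (le_max_left _ _)
  have hθ : |θb| ≤ max |φ| (2*|θb|) :=
    le_trans (by linarith [abs_nonneg θb]) (le_max_right _ _)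
  rcases (by omega : i = 0 ∨ i = 1 ∨ i = 2 ∨ i = 3 ∨ i = 4 ∨ i = 5 ∨ i = 6 ∨ 7 ≤ i) with
    hc|hc|hc|hc|hc|hc|hc|hc
  · subst hc; norm_num [ktK, abs_neg]
  · subst hc; norm_num [ktK, h0]
  · subst hc; norm_num [ktK]; right; linarith [abs_nonneg θb]
  · subst hc; norm_num [ktK, h0]
  · subst hc
    have e : -θb - θb = -(2*θb) := by ring
    norm_num [ktK, e, abs_neg, abs_mul]
  · subst hc; norm_num [ktK, h0]
  · subst hc; norm_num [ktK]; right; linarith [abs_nonneg θb]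
  · have f1 : ¬(i+1 = 0) := by omega
    have f2 : ¬(i+1 ≤ 2) := by omega
    have f3 : ¬(i+1 ≤ 4) := by omega
    have f4 : ¬(i+1 ≤ 6) := by omega
    have g1 : ¬(i = 0) := by omega
    have g2 : ¬(i ≤ 2) := by omega
    have g3 : ¬(i ≤ 4) := by omega
    have g4 : ¬(i ≤ 6) := by omega
    simp only [ktK, if_neg f1, if_neg f2, if_neg f3, if_neg f4, if_neg g1, if_neg g2,
      if_neg g3, if_neg g4, sub_zero, abs_zero]
    exact h0

lemma kvd_bound (a d : ℝ) (hd0 : 0 ≤ d) : ∀ i, |kvK a d (i+1) - kvK a d i| ≤ max |a| d := by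
  intro i
  have h0 : (0:ℝ) ≤ max |a| d := le_trans (abs_nonneg a) (le_max_left _ _)
  rcases (by omega : i = 0 ∨ i = 1 ∨ i = 2 ∨ i = 3 ∨ i = 4 ∨ i = 5 ∨ 6 ≤ i) with
    hc|hc|hc|hc|hc|hc|hc
  · subst hc; simp [kvK, h0]
  · subst hc; norm_num [kvK]
  · subst hc; simp [kvK, h0]
  · subst hc; norm_num [kvK]
    right; exact le_of_eq (abs_of_nonneg hd0)
  · subst hc; simp [kvK, h0]
  · subst hc
    have e : -a - (-a + d) = -d := by ring
    simp only [kvK]; norm_num [e]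
    right; exact le_of_eq (abs_of_nonneg hd0)
  · have e1 : ¬(i ≤ 1) := by omega
    have e2 : ¬(i ≤ 3) := by omega
    have e3 : ¬(i ≤ 5) := by omega
    have e1' : ¬(i+1 ≤ 1) := by omega
    have e2' : ¬(i+1 ≤ 3) := by omega
    have e3' : ¬(i+1 ≤ 5) := by omega
    simp [kvK, e1, e2, e3, e1', e2', e3', h0]

lemma abs_arctan_le (y : ℝ) : |Real.arctan y| ≤ |y| := by
  rcases le_or_gt 0 y with hy | hy
  · have h1 : 0 ≤ Real.arctan y := by
      rw [← Real.arctan_zero]; exact Real.arctan_strictMono.monotone hy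
    rw [abs_of_nonneg h1, abs_of_nonneg hy]
    calc Real.arctan y ≤ Real.tan (Real.arctan y) :=
          Real.le_tan h1 (Real.arctan_lt_pi_div_two y)
      _ = y := Real.tan_arctan y
  · have hy' : 0 ≤ -y := by linarith
    have h1 : 0 ≤ Real.arctan (-y) := by
      rw [← Real.arctan_zero]; exact Real.arctan_strictMono.monotone hy'
    have h3 : Real.arctan (-y) ≤ -y :=
      le_trans (Real.le_tan h1 (Real.arctan_lt_pi_div_two _)) (le_of_eq (Real.tan_arctan _))
    rw [Real.arctan_neg] at h3
    have hle : Real.arctan y ≤ 0 := by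
      rw [← Real.arctan_zero]; exact Real.arctan_strictMono.monotone hy.le
    rw [abs_of_nonpos hle, abs_of_neg hy]
    linarith

end SteerAux

/-- The discrete-time dynamic unicycle model: `x` is a solution with input `u`. -/
def UnicycleSol (m J k κ h : ℝ) (u : ℕ → ℝ × ℝ)
    (x : ℕ → EuclideanSpace ℝ (Fin 5)) : Prop :=
  ∀ t : ℕ,
    x (t + 1) 0 = x t 0 + h * x t 3 * Real.cos (x t 2) ∧
    x (t + 1) 1 = x t 1 + h * x t 3 * Real.sin (x t 2) ∧
    x (t + 1) 2 = x t 2 + h * x t 4 ∧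
    x (t + 1) 3 = x t 3 + (h / m) * ((u t).1 - k * x t 3) ∧
    x (t + 1) 4 = x t 4 + (h / J) * ((u t).2 - κ * x t 4)

set_option maxHeartbeats 1000000 in
/-- explicit steering of the unicycle to the origin within the
prediction horizon, with a uniform bound on the intermediate states. -/
theorem unicycle_explicit_steering
    (m J k κ h : ℝ) (hm : 0 < m) (hJ : 0 < J) (hk : 0 < k) (hκ : 0 < κ) (hh : 0 < h)
    (N : ℕ) (hN : 8 ≤ N) :
    ∀ x₀ : EuclideanSpace ℝ (Fin 5),
      ∃ (u : ℕ → ℝ × ℝ) (x : ℕ → EuclideanSpace ℝ (Fin 5)),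
        x 0 = x₀ ∧
        UnicycleSol m J k κ h u x ∧
        (∀ t : ℕ, 1 + 7 * ((N - 1) / 7) ≤ t → t ≤ N → x t = 0) ∧
        (∀ t : ℕ, 1 ≤ t → t < 1 + 7 * ((N - 1) / 7) →
          ‖x t‖ ≤
            (2 * Real.sqrt (1 + h ^ 2) *
              Real.sqrt (9/4 + 4 / (h ^ 2 * max 1 (((N : ℝ) - 8) / 7) ^ 2))) *
            max (‖x₀‖ ^ (1/2 : ℝ)) ‖x₀‖) := by
  intro x₀
  set T : ℕ := (N - 1) / 7 with hTdef
  have hT : 0 < T := by omega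
  have hTge : N ≤ 7*T + 7 := by omega
  have hTR : (0:ℝ) < (T:ℝ) := by exact_mod_cast hT
  have hh' : h ≠ 0 := hh.ne'
  set a := x₀ 0 + h * x₀ 3 * Real.cos (x₀ 2) with ha
  set b := x₀ 1 + h * x₀ 3 * Real.sin (x₀ 2) with hb
  set φ := x₀ 2 + h * x₀ 4 with hφ
  set θb := Real.arctan (-b / Real.sqrt |b|) with hθbdef
  set d := Real.sqrt (|b| + b^2) / 2 with hddef
  set Dc := d * Real.cos θb with hDcdef
  have hd0 : 0 ≤ d := by rw [hddef]; positivity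
  have hdsq : d^2 = (|b| + b^2)/4 := by
    rw [hddef, div_pow, Real.sq_sqrt (by positivity)]; norm_num
  obtain ⟨hds, hθb2⟩ : d * Real.sin θb = -b/2 ∧ θb^2 ≤ |b| := by
    rcases eq_or_ne b 0 with h0 | h0
    · constructor
      · rw [hθbdef, hddef, h0]; norm_num
      · rw [hθbdef, h0]; norm_num
    · have habs : 0 < |b| := abs_pos.mpr h0
      have hs : 0 < Real.sqrt |b| := Real.sqrt_pos.mpr habs
      have hy2 : (-b / Real.sqrt |b|)^2 = |b| := by
        rw [div_pow, neg_sq, Real.sq_sqrt (abs_nonneg b), ← sq_abs b, sq, mul_div_assoc,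
          div_self habs.ne', mul_one]
      constructor
      · have hsin : Real.sin θb = (-b / Real.sqrt |b|) / Real.sqrt (1 + |b|) := by
          rw [hθbdef, Real.sin_arctan, hy2]
        have hdd : d = Real.sqrt |b| * Real.sqrt (1 + |b|) / 2 := by
          rw [hddef, ← Real.sqrt_mul (abs_nonneg b)]
          congr 2
          rw [← sq_abs b]; ring
        rw [hdd, hsin]
        have h1 : Real.sqrt (1+|b|) ≠ 0 := by positivity
        field_simp
      · have harc : |θb| ≤ |(-b / Real.sqrt |b|)| := by
          rw [hθbdef]; exact abs_arctan_le _
        calc θb^2 = |θb|^2 := (sq_abs θb).symm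
          _ ≤ |(-b / Real.sqrt |b|)|^2 := pow_le_pow_left₀ (abs_nonneg _) harc 2
          _ = |b| := by rw [sq_abs, hy2]
  have hDcle : |Dc| ≤ d := by
    have he : |Dc| = d * |Real.cos θb| := by rw [hDcdef, abs_mul, abs_of_nonneg hd0]
    rw [he]
    exact mul_le_of_le_one_right hd0 (Real.abs_cos_le_one θb)
  clear_value T a b φ θb d Dc
  set P := plin T (kxK a Dc) (x₀ 0) with hP
  set Q := plin T (kyK b) (x₀ 1) with hQ
  set Θf := plin T (ktK φ θb) (x₀ 2) with hΘ
  set V := slp T (kvK a d) h (x₀ 3) with hV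
  set W := slp T (ktK φ θb) h (x₀ 4) with hW
  clear_value P Q Θf V W
  refine ⟨fun t => (m/h * (V (t+1) - V t) + k * V t, J/h * (W (t+1) - W t) + κ * W t),
    fun t => (WithLp.equiv 2 (Fin 5 → ℝ)).symm ![P t, Q t, Θf t, V t, W t], ?_, ?_, ?_, ?_⟩
  · ext i
    fin_cases i <;>
      simp [WithLp.equiv_symm_apply, PiLp.toLp_apply, hP, hQ, hΘ, hV, hW, plin, slp]
  · intro t
    refine ⟨?_, ?_, ?_, ?_, ?_⟩
    · show P (t+1) = P t + h * V t * Real.cos (Θf t)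
      rcases Nat.eq_zero_or_pos t with h0 | h1
      · subst h0
        show P 1 = P 0 + h * V 0 * Real.cos (Θf 0)
        rw [hP, hV, hΘ, plin_one T _ _ hT]
        simp only [plin, slp, if_pos rfl]
        simp only [kxK, if_pos (by norm_num : (0:ℕ) ≤ 1)]
        exact ha
      · rw [hP, hV, hΘ]
        exact dyn0 T hT a b d Dc φ θb h hh' hDcdef (x₀ 0) (x₀ 3) (x₀ 2) h1
    · show Q (t+1) = Q t + h * V t * Real.sin (Θf t)
      rcases Nat.eq_zero_or_pos t with h0 | h1
      · subst h0
        show Q 1 = Q 0 + h * V 0 * Real.sin (Θf 0)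
        rw [hQ, hV, hΘ, plin_one T _ _ hT]
        simp only [plin, slp, if_pos rfl]
        simp only [kyK, if_pos (by norm_num : (0:ℕ) ≤ 3)]
        exact hb
      · rw [hQ, hV, hΘ]
        exact dyn1 T hT a b d φ θb h hh' hds (x₀ 1) (x₀ 3) (x₀ 2) h1
    · show Θf (t+1) = Θf t + h * W t
      rcases Nat.eq_zero_or_pos t with h0 | h1
      · subst h0
        show Θf 1 = Θf 0 + h * W 0
        rw [hΘ, hW, plin_one T _ _ hT]
        simp only [plin, slp, if_pos rfl]
        simp only [ktK, if_pos rfl]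
        exact hφ
      · rw [hΘ, hW]
        exact dyn2 T hT φ θb h hh' (x₀ 2) (x₀ 4) h1
    · show V (t+1) = V t + (h/m) * ((m/h * (V (t+1) - V t) + k * V t) - k * V t)
      field_simp
      ring
    · show W (t+1) = W t + (h/J) * ((J/h * (W (t+1) - W t) + κ * W t) - κ * W t)
      field_simp
      ring
  · intro t htl htu
    have hP0 : P t = 0 := by
      rw [hP]
      refine plin_tail T _ _ hT (j := 6) (by omega) ?_
      intro i hi
      simp only [kxK, if_neg (by omega : ¬ i ≤ 1), if_neg (by omega : ¬ (i = 4 ∨ i = 5))]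
    have hQ0 : Q t = 0 := by
      rw [hQ]
      refine plin_tail T _ _ hT (j := 6) (by omega) ?_
      intro i hi
      simp only [kyK, if_neg (by omega : ¬ i ≤ 3), if_neg (by omega : ¬ i ≤ 5)]
    have hΘ0 : Θf t = 0 := by
      rw [hΘ]
      refine plin_tail T _ _ hT (j := 7) (by omega) ?_
      intro i hi
      simp only [ktK, if_neg (by omega : ¬ i = 0), if_neg (by omega : ¬ i ≤ 2),
        if_neg (by omega : ¬ i ≤ 4), if_neg (by omega : ¬ i ≤ 6)]
    have hi6 : 6 ≤ (t-1)/T := by rw [Nat.le_div_iff_mul_le hT]; omega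
    have hV0 : V t = 0 := by
      rw [hV, slp, if_neg (by omega : ¬ t = 0)]
      have e1 : kvK a d ((t-1)/T + 1) = -a := by
        simp only [kvK, if_neg (by omega : ¬ (t-1)/T + 1 ≤ 1),
          if_neg (by omega : ¬ (t-1)/T + 1 ≤ 3), if_neg (by omega : ¬ (t-1)/T + 1 ≤ 5)]
      have e2 : kvK a d ((t-1)/T) = -a := by
        simp only [kvK, if_neg (by omega : ¬ (t-1)/T ≤ 1),
          if_neg (by omega : ¬ (t-1)/T ≤ 3), if_neg (by omega : ¬ (t-1)/T ≤ 5)]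
      rw [e1, e2]
      simp
    have hi7 : 7 ≤ (t-1)/T := by rw [Nat.le_div_iff_mul_le hT]; omega
    have hW0 : W t = 0 := by
      rw [hW, slp, if_neg (by omega : ¬ t = 0)]
      have e1 : ktK φ θb ((t-1)/T + 1) = 0 := by
        simp only [ktK, if_neg (by omega : ¬ (t-1)/T + 1 = 0),
          if_neg (by omega : ¬ (t-1)/T + 1 ≤ 2), if_neg (by omega : ¬ (t-1)/T + 1 ≤ 4),
          if_neg (by omega : ¬ (t-1)/T + 1 ≤ 6)]
      have e2 : ktK φ θb ((t-1)/T) = 0 := by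
        simp only [ktK, if_neg (by omega : ¬ (t-1)/T = 0),
          if_neg (by omega : ¬ (t-1)/T ≤ 2), if_neg (by omega : ¬ (t-1)/T ≤ 4),
          if_neg (by omega : ¬ (t-1)/T ≤ 6)]
      rw [e1, e2]
      simp
    ext i
    fin_cases i <;>
      simp [WithLp.equiv_symm_apply, PiLp.toLp_apply, hP0, hQ0, hΘ0, hV0, hW0]
  · intro t ht1 ht2
    set X := max (‖x₀‖ ^ (1/2 : ℝ)) ‖x₀‖ with hX
    have hX0 : 0 ≤ X := le_trans (norm_nonneg _) (le_max_right _ _)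
    have hXn : ‖x₀‖ ≤ X := le_max_right _ _
    have hXn2 : ‖x₀‖ ≤ X^2 := by
      have e1 : (‖x₀‖ ^ (1/2:ℝ))^2 = ‖x₀‖ := by
        rw [← Real.rpow_natCast (‖x₀‖ ^ (1/2:ℝ)) 2, ← Real.rpow_mul (norm_nonneg _)]
        norm_num
      nlinarith [le_max_left (‖x₀‖ ^ (1/2:ℝ)) ‖x₀‖, e1,
        Real.rpow_nonneg (norm_nonneg x₀) (1/2:ℝ), norm_nonneg x₀]
    clear_value X
    have hn2 : ‖x₀‖^2 ≤ X^2 := by nlinarith [hXn, norm_nonneg x₀]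
    have hn4 : ‖x₀‖^2 ≤ X^4 := by nlinarith [hXn2, norm_nonneg x₀]
    have hn_eq : ‖x₀‖^2 = x₀ 0^2 + x₀ 1^2 + x₀ 2^2 + x₀ 3^2 + x₀ 4^2 := by
      rw [EuclideanSpace.norm_eq, Real.sq_sqrt (by positivity)]
      simp [Fin.sum_univ_five, Real.norm_eq_abs, sq_abs]
    have habs2 : a^2 + b^2 + φ^2 ≤ (1+h^2) * ‖x₀‖^2 := by
      rw [ha, hb, hφ, hn_eq]
      nlinarith [Real.sin_sq_add_cos_sq (x₀ 2),
        sq_nonneg (h * x₀ 0 - x₀ 3 * Real.cos (x₀ 2)),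
        sq_nonneg (h * x₀ 1 - x₀ 3 * Real.sin (x₀ 2)),
        sq_nonneg (h * x₀ 2 - x₀ 4), sq_nonneg (x₀ 3), sq_nonneg (h * x₀ 3), sq_nonneg h]
    have hone : (0:ℝ) ≤ 1 + h^2 := by positivity
    have hGmono : (1+h^2) * ‖x₀‖^2 ≤ (1+h^2) * X^2 := mul_le_mul_of_nonneg_left hn2 hone
    have hGmono4 : (1+h^2) * ‖x₀‖^2 ≤ (1+h^2) * X^4 := mul_le_mul_of_nonneg_left hn4 hone
    set G := (1+h^2) * X^2 with hG
    have hG0 : 0 ≤ G := by rw [hG]; positivity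
    clear_value G
    have ha2 : a^2 ≤ G := by rw [hG]; linarith [habs2, hGmono, sq_nonneg b, sq_nonneg φ]
    have hb2 : b^2 ≤ G := by rw [hG]; linarith [habs2, hGmono, sq_nonneg a, sq_nonneg φ]
    have hφ2 : φ^2 ≤ G := by rw [hG]; linarith [habs2, hGmono, sq_nonneg a, sq_nonneg b]
    have hbG : |b| ≤ G := by
      have h9 : |b|^2 ≤ G^2 := by
        rw [sq_abs, hG]
        nlinarith [habs2, hGmono4, sq_nonneg a, sq_nonneg φ,
          mul_nonneg (mul_nonneg (sq_nonneg h) hone) (by positivity : (0:ℝ) ≤ X^4)]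
      nlinarith [h9, abs_nonneg b, hG0]
    have hd2G : d^2 ≤ G := by rw [hdsq]; linarith [hbG, hb2, hG0]
    have hθG : θb^2 ≤ G := le_trans hθb2 hbG
    have hP1 : |P t| ≤ max |a| d := by
      rw [hP]; exact plin_bound T _ _ hT (kx_bound a Dc d hd0 hDcle) ht1
    have hQ1 : |Q t| ≤ |b| := by
      rw [hQ]; exact plin_bound T _ _ hT (ky_bound b) ht1
    have hΘ1 : |Θf t| ≤ max |φ| |θb| := by
      rw [hΘ]; exact plin_bound T _ _ hT (kt_bound φ θb) ht1
    have hV1 : |V t| ≤ (max |a| d) / (h*(T:ℝ)) := by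
      rw [hV]; exact slp_bound T _ h _ hT hh (kvd_bound a d hd0) ht1
    have hW1 : |W t| ≤ (max |φ| (2*|θb|)) / (h*(T:ℝ)) := by
      rw [hW]; exact slp_bound T _ h _ hT hh (ktd_bound φ θb) ht1
    have hA2 : (max |a| d)^2 ≤ G := by
      rcases max_choice |a| d with hM | hM <;> rw [hM]
      · rw [sq_abs]; exact ha2
      · exact hd2G
    have hB2 : (max |φ| |θb|)^2 ≤ G := by
      rcases max_choice |φ| |θb| with hM | hM <;> rw [hM, sq_abs]
      · exact hφ2
      · exact hθG
    have hC2 : (max |φ| (2*|θb|))^2 ≤ 4*G := by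
      rcases max_choice |φ| (2*|θb|) with hM | hM <;> rw [hM]
      · rw [sq_abs]; linarith [hφ2, hG0]
      · have e : (2*|θb|)^2 = 4*θb^2 := by rw [mul_pow, sq_abs]; norm_num
        rw [e]; linarith [hθG]
    have hTpos : (0:ℝ) < h*(T:ℝ) := mul_pos hh hTR
    have hsqP : P t^2 ≤ G := by
      calc P t^2 = |P t|^2 := (sq_abs _).symm
        _ ≤ (max |a| d)^2 := pow_le_pow_left₀ (abs_nonneg _) hP1 2
        _ ≤ G := hA2
    have hsqQ : Q t^2 ≤ G := by
      calc Q t^2 = |Q t|^2 := (sq_abs _).symm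
        _ ≤ |b|^2 := pow_le_pow_left₀ (abs_nonneg _) hQ1 2
        _ = b^2 := sq_abs b
        _ ≤ G := hb2
    have hsqT : Θf t^2 ≤ G := by
      calc Θf t^2 = |Θf t|^2 := (sq_abs _).symm
        _ ≤ (max |φ| |θb|)^2 := pow_le_pow_left₀ (abs_nonneg _) hΘ1 2
        _ ≤ G := hB2
    have hsqV : V t^2 ≤ G / (h*(T:ℝ))^2 := by
      calc V t^2 = |V t|^2 := (sq_abs _).symm
        _ ≤ ((max |a| d) / (h*(T:ℝ)))^2 := pow_le_pow_left₀ (abs_nonneg _) hV1 2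
        _ = (max |a| d)^2 / (h*(T:ℝ))^2 := by rw [div_pow]
        _ ≤ G / (h*(T:ℝ))^2 := (div_le_div_iff_of_pos_right (pow_pos hTpos 2)).mpr hA2
    have hsqW : W t^2 ≤ 4*(G / (h*(T:ℝ))^2) := by
      calc W t^2 = |W t|^2 := (sq_abs _).symm
        _ ≤ ((max |φ| (2*|θb|)) / (h*(T:ℝ)))^2 := pow_le_pow_left₀ (abs_nonneg _) hW1 2
        _ = (max |φ| (2*|θb|))^2 / (h*(T:ℝ))^2 := by rw [div_pow]
        _ ≤ 4*(G / (h*(T:ℝ))^2) := by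
            rw [← mul_div_assoc]
            exact (div_le_div_iff_of_pos_right (pow_pos hTpos 2)).mpr hC2
    set Mv := max 1 (((N:ℝ) - 8) / 7) with hMv
    have hMv1 : (1:ℝ) ≤ Mv := le_max_left _ _
    have hMvT : Mv ≤ (T:ℝ) := by
      apply max_le
      · exact_mod_cast Nat.one_le_cast.mpr hT
      · rw [div_le_iff₀ (by norm_num : (0:ℝ) < 7)]
        have hc : (N:ℝ) ≤ 7*(T:ℝ) + 7 := by exact_mod_cast hTge
        linarith
    have hMvpos : (0:ℝ) < Mv := lt_of_lt_of_le one_pos hMv1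
    clear_value Mv
    have hden : h^2 * Mv^2 ≤ (h*(T:ℝ))^2 := by
      rw [mul_pow]
      exact mul_le_mul_of_nonneg_left
        (pow_le_pow_left₀ (by linarith) hMvT 2) (sq_nonneg h)
    have hdenpos : (0:ℝ) < h^2 * Mv^2 := mul_pos (pow_pos hh 2) (pow_pos hMvpos 2)
    have hdiv : G / (h*(T:ℝ))^2 ≤ G / (h^2 * Mv^2) :=
      div_le_div_of_nonneg_left hG0 hdenpos hden
    have hQv0 : (0:ℝ) ≤ 9/4 + 4/(h^2 * Mv^2) := by positivity
    change ‖(WithLp.equiv 2 (Fin 5 → ℝ)).symm ![P t, Q t, Θf t, V t, W t]‖ ≤ _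
    have hsum : ‖(WithLp.equiv 2 (Fin 5 → ℝ)).symm ![P t, Q t, Θf t, V t, W t]‖^2
        = P t^2 + Q t^2 + Θf t^2 + V t^2 + W t^2 := by
      rw [EuclideanSpace.norm_eq, Real.sq_sqrt (by positivity)]
      simp [Fin.sum_univ_five, Real.norm_eq_abs, sq_abs]
    have hRHS0 : 0 ≤ 2 * Real.sqrt (1 + h ^ 2) *
        Real.sqrt (9/4 + 4 / (h ^ 2 * Mv ^ 2)) * X :=
      mul_nonneg (mul_nonneg (by positivity) (Real.sqrt_nonneg _)) hX0
    have hRsq : (2 * Real.sqrt (1 + h ^ 2) * Real.sqrt (9/4 + 4 / (h ^ 2 * Mv ^ 2)) * X)^2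
        = 4*(1+h^2)*(9/4 + 4/(h^2 * Mv^2))*X^2 := by
      rw [mul_pow, mul_pow, mul_pow, Real.sq_sqrt hone, Real.sq_sqrt hQv0]
      ring
    have hexp : 4*(1+h^2)*(9/4 + 4/(h^2 * Mv^2))*X^2 = 9*G + 16*(G/(h^2 * Mv^2)) := by
      rw [hG]
      field_simp [hh', ne_of_gt hMvpos]
      ring
    have hfinal : P t^2 + Q t^2 + Θf t^2 + V t^2 + W t^2 ≤
        (2 * Real.sqrt (1 + h ^ 2) * Real.sqrt (9/4 + 4 / (h ^ 2 * Mv ^ 2)) * X)^2 := by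
      rw [hRsq, hexp]
      have hdivnn : (0:ℝ) ≤ G/(h*(T:ℝ))^2 := div_nonneg hG0 (by positivity)
      linarith [hsqP, hsqQ, hsqT, hsqV, hsqW, hdiv, hG0, hdivnn]
    calc ‖(WithLp.equiv 2 (Fin 5 → ℝ)).symm ![P t, Q t, Θf t, V t, W t]‖
        = Real.sqrt (‖(WithLp.equiv 2 (Fin 5 → ℝ)).symm ![P t, Q t, Θf t, V t, W t]‖^2) :=
          (Real.sqrt_sq (norm_nonneg _)).symm
      _ = Real.sqrt (P t^2 + Q t^2 + Θf t^2 + V t^2 + W t^2) := by rw [hsum]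
      _ ≤ Real.sqrt ((2 * Real.sqrt (1 + h ^ 2) *
            Real.sqrt (9/4 + 4 / (h ^ 2 * Mv ^ 2)) * X)^2) := Real.sqrt_le_sqrt hfinal
      _ = 2 * Real.sqrt (1 + h ^ 2) * Real.sqrt (9/4 + 4 / (h ^ 2 * Mv ^ 2)) * X :=
          Real.sqrt_sq hRHS0
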